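/- For every partial term graph g over Σ_⊥ and every d ≤ ω, the rigid truncation of g at depth d is smaller than g in the rigid partial order: g†d ≤⊥r g (i.e., there is a rigid ⊥-homomorphism from g†d to g). -/

import Mathlib

set_option autoImplicit false

namespace TGR

/-- A signature: a type of symbols, each with a finite arity. -/
structure Signature where
  Sym : Type
  ar : Sym → ℕ

/-- The signature `Σ_⊥`: `Σ` extended by a fresh nullary symbol `⊥` (here `none`). -/
def Signature.bot (S : Signature) : Signature where
  Sym := Option S.Sym
  ar := fun o => match o with
    | none => 0
    | some f => S.ar f

/-- A rooted graph over a signature `S` with nodes `N`: a labelling, a successor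
function respecting arities, and a root node. -/
structure TermGraph (S : Signature) (N : Type) where
  lab : N → S.Sym
  suc : (n : N) → Fin (S.ar (lab n)) → N
  root : N

namespace TermGraph

variable {S : Signature} {N M K : Type}

/-- `g.IsPos π n`: `π` is a position (path of successor indices from the root) of node `n`. -/
inductive IsPos (g : TermGraph S N) : List ℕ → N → Prop
  | root : IsPos g [] g.root
  | step {π : List ℕ} {n : N} (h : IsPos g π n) (i : Fin (S.ar (g.lab n))) :
      IsPos g (π ++ [(i : ℕ)]) (g.suc n i)

/-- All nodes are reachable from the root. -/
def Reachable (g : TermGraph S N) : Prop :=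
  ∀ n : N, ∃ π : List ℕ, g.IsPos π n

/-- The set of positions of `g`. -/
def pos (g : TermGraph S N) : Set (List ℕ) :=
  {π | ∃ n : N, g.IsPos π n}

/-- The set of positions of node `n` in `g`. -/
def nodePos (g : TermGraph S N) (n : N) : Set (List ℕ) :=
  {π | g.IsPos π n}

/-- `π ∼_g π'`: `π` and `π'` are positions of the same node. -/
def Aliases (g : TermGraph S N) (π π' : List ℕ) : Prop :=
  ∃ n : N, g.IsPos π n ∧ g.IsPos π' n

/-- A position is acyclic if it passes no node twice. -/
def IsAcyclicPos (g : TermGraph S N) (π : List ℕ) : Prop :=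
  ∀ (π₁ π₂ : List ℕ) (n : N), π₁ <+: π₂ → π₂ <+: π →
    g.IsPos π₁ n → g.IsPos π₂ n → π₁ = π₂

/-- The set of acyclic positions of node `n` in `g`. -/
def nodePosAcy (g : TermGraph S N) (n : N) : Set (List ℕ) :=
  {π | g.IsPos π n ∧ g.IsAcyclicPos π}

/-- The set of acyclic positions of `g`. -/
def posAcy (g : TermGraph S N) : Set (List ℕ) :=
  {π | (∃ n : N, g.IsPos π n) ∧ g.IsAcyclicPos π}

/-- The depth of a node: the minimal length of its positions. -/
noncomputable def depth (g : TermGraph S N) (n : N) : ℕ :=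
  sInf {k : ℕ | ∃ π : List ℕ, g.IsPos π n ∧ π.length = k}

open Classical in
/-- The (unique) node at a position. -/
noncomputable def nodeAt (g : TermGraph S N) (π : List ℕ) : N :=
  if h : ∃ n : N, g.IsPos π n then h.choose else g.root

/-- The label `g(π)` at a position. -/
noncomputable def labAt (g : TermGraph S N) (π : List ℕ) : S.Sym :=
  g.lab (g.nodeAt π)

/-- `Δ`-homomorphism: root, labelling and successor conditions, the latter two
suspended on `Δ`-labelled nodes. -/
structure IsDHom (Δ : Set S.Sym) (g : TermGraph S N) (h : TermGraph S M)
    (φ : N → M) : Prop where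
  root_eq : φ g.root = h.root
  lab_eq : ∀ n : N, g.lab n ∉ Δ → h.lab (φ n) = g.lab n
  suc_eq : ∀ n : N, g.lab n ∉ Δ → ∀ (i : ℕ) (hi : i < S.ar (g.lab n))
      (hi' : i < S.ar (h.lab (φ n))),
      φ (g.suc n ⟨i, hi⟩) = h.suc (φ n) ⟨i, hi'⟩

/-- Rigidity: `Pa_g(n) = Pa_h(φ n)` for all non-`Δ`-labelled nodes `n`. -/
def IsRigid (Δ : Set S.Sym) (g : TermGraph S N) (h : TermGraph S M)
    (φ : N → M) : Prop :=
  ∀ n : N, g.lab n ∉ Δ → g.nodePosAcy n = h.nodePosAcy (φ n)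

/-- Rigid `Δ`-homomorphism. -/
def IsRigidDHom (Δ : Set S.Sym) (g : TermGraph S N) (h : TermGraph S M)
    (φ : N → M) : Prop :=
  IsDHom Δ g h φ ∧ IsRigid Δ g h φ

/-- Isomorphism of term graphs: a homomorphism with an inverse homomorphism. -/
def Iso (g : TermGraph S N) (h : TermGraph S M) : Prop :=
  ∃ (φ : N → M) (ψ : M → N), IsDHom ∅ g h φ ∧ IsDHom ∅ h g ψ ∧
    (∀ n : N, ψ (φ n) = n) ∧ (∀ m : M, φ (ψ m) = m)

/-- A partial term graph (over `Σ_⊥`) is total if no node is labelled `⊥`. -/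
def Total (g : TermGraph S.bot N) : Prop := ∀ n : N, g.lab n ≠ none

/-- Rigid `⊥`-homomorphism between partial term graphs. -/
def IsRigidBotHom (g : TermGraph S.bot N) (h : TermGraph S.bot M)
    (φ : N → M) : Prop :=
  IsRigidDHom ({none} : Set (Option S.Sym)) g h φ

/-- The `⊥`-depth of a partial term graph: the minimal depth of a `⊥`-labelled
node, `ω` (`⊤`) if there is none. -/
noncomputable def botDepth (g : TermGraph S.bot N) : ℕ∞ :=
  sInf {d : ℕ∞ | ∃ n : N, g.lab n = none ∧ (g.depth n : ℕ∞) = d}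

/-- `m` is an acyclic predecessor of `n`: some acyclic position `π ++ [i]` of `n`
has `π` a position of `m`. -/
def acyPred (g : TermGraph S N) (n : N) : Set N :=
  {m | ∃ (π : List ℕ) (i : ℕ), (π ++ [i]) ∈ g.nodePosAcy n ∧ g.IsPos π m}

/-- Retained nodes of the truncation at depth `d`: the least set of nodes
containing all nodes of depth `< d` and closed under acyclic predecessors. -/
inductive Retained (g : TermGraph S N) (d : ℕ) : N → Prop
  | shallow {n : N} : g.depth n < d → Retained g d n
  | pred {n m : N} : Retained g d n → m ∈ g.acyPred n → Retained g d m

theorem not_retained_zero {g : TermGraph S N} (n : N) : ¬ g.Retained 0 n := by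
  intro h
  induction h with
  | shallow hd => exact Nat.not_lt_zero _ hd
  | pred _ _ ih => exact ih

/-- Fringe nodes of the truncation at depth `d` (a pair `(n, i)` stands for the
fresh node `n^i`); at depth `0` the fringe is just (a copy of) the root. -/
def IsFringe (g : TermGraph S.bot N) (d : ℕ) (p : N × ℕ) : Prop :=
  if d = 0 then p = (g.root, 0)
  else g.Retained d p.1 ∧ ∃ h : p.2 < S.bot.ar (g.lab p.1),
    (¬ g.Retained d (g.suc p.1 ⟨p.2, h⟩) ∨
      (d - 1 ≤ g.depth p.1 ∧ p.1 ∉ g.acyPred (g.suc p.1 ⟨p.2, h⟩)))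

/-- The node set of the rigid truncation: retained nodes plus fringe nodes. -/
def TNode (g : TermGraph S.bot N) (d : ℕ) : Type :=
  {x : N ⊕ (N × ℕ) // Sum.elim (g.Retained d) (g.IsFringe d) x}

def truncLab (g : TermGraph S.bot N) (d : ℕ) (x : TNode g d) : S.bot.Sym :=
  Sum.elim (fun n => g.lab n) (fun _ => none) x.1

open Classical in
noncomputable def truncSuc (g : TermGraph S.bot N) (d : ℕ) :
    (x : TNode g d) → Fin (S.bot.ar (truncLab g d x)) → TNode g d
  | ⟨Sum.inl n, hn⟩ => fun i =>
      if hf : g.IsFringe d (n, (i : ℕ)) then ⟨Sum.inr (n, (i : ℕ)), hf⟩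
      else
        ⟨Sum.inl (g.suc n ⟨(i : ℕ), i.isLt⟩), by
          show g.Retained d (g.suc n ⟨(i : ℕ), i.isLt⟩)
          rcases Nat.eq_zero_or_pos d with hd | hd
          · subst hd
            exact ((not_retained_zero n) hn).elim
          · by_contra hc
            apply hf
            show g.IsFringe d (n, (i : ℕ))
            unfold IsFringe
            rw [if_neg (Nat.pos_iff_ne_zero.mp hd)]
            exact ⟨hn, i.isLt, Or.inl hc⟩⟩
  | ⟨Sum.inr p, hp⟩ => fun i => absurd i.isLt (Nat.not_lt_zero _)

noncomputable def truncRoot (g : TermGraph S.bot N) (d : ℕ) : TNode g d :=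
  if hd : d = 0 then
    ⟨Sum.inr (g.root, 0), by
      subst hd
      show g.IsFringe 0 (g.root, 0)
      simp [IsFringe]⟩
  else
    ⟨Sum.inl g.root, by
      show g.Retained d g.root
      exact Retained.shallow (lt_of_le_of_lt
        (Nat.sInf_le ⟨[], IsPos.root, rfl⟩) (Nat.pos_of_ne_zero hd))⟩

/-- The rigid truncation `g†d` of a partial term graph at finite depth `d`. -/
noncomputable def trunc (g : TermGraph S.bot N) (d : ℕ) :
    TermGraph S.bot (TNode g d) where
  lab := truncLab g d
  suc := truncSuc g d
  root := truncRoot g d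

end TermGraph

/-- A canonical term graph: a term graph whose nodes are sets of positions,
each node being exactly its set of positions, with all nodes reachable. -/
structure CTG (S : Signature) where
  nodes : Set (Set (List ℕ))
  tg : TermGraph S ↥nodes
  reach : tg.Reachable
  canon : ∀ n : ↥nodes, (n : Set (List ℕ)) = tg.nodePos n

namespace CTG

variable {S : Signature}

def pos (g : CTG S) : Set (List ℕ) := g.tg.pos
def Aliases (g : CTG S) : List ℕ → List ℕ → Prop := g.tg.Aliases
def posAcy (g : CTG S) : Set (List ℕ) := g.tg.posAcy
noncomputable def labAt (g : CTG S) : List ℕ → S.Sym := g.tg.labAt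

/-- A canonical partial term graph is total if it has no `⊥`-labelled node. -/
def Total (g : CTG S.bot) : Prop := g.tg.Total

/-- The rigid partial order `g ≤⊥r h`: there is a rigid `⊥`-homomorphism
from `g` to `h`. -/
def LeR (g h : CTG S.bot) : Prop :=
  ∃ φ, TermGraph.IsRigidBotHom g.tg h.tg φ

noncomputable def botDepth (g : CTG S.bot) : ℕ∞ := g.tg.botDepth

/-- `TruncIso g h d`: the rigid truncations of `g` and `h` at depth `d ≤ ω`
are isomorphic (`g†ω = g`). -/
def TruncIso {N M : Type} (g : TermGraph S.bot N) (h : TermGraph S.bot M)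
    (d : ℕ∞) : Prop :=
  (d = ⊤ → TermGraph.Iso g h) ∧
  ∀ k : ℕ, d = (k : ℕ∞) → TermGraph.Iso (g.trunc k) (h.trunc k)

/-- The rigid similarity `sim†(g,h)`: the maximal `d ≤ ω` such that
`g†d ≅ h†d`. -/
noncomputable def simr (g h : CTG S.bot) : ℕ∞ :=
  sSup {d : ℕ∞ | TruncIso g.tg h.tg d}

open Classical in
/-- The rigid distance `d†(g,h) = 2^{-sim†(g,h)}` (with `2^{-ω} = 0`). -/
noncomputable def rdist (g h : CTG S.bot) : ℝ :=
  if simr g h = ⊤ then 0 else (1 / 2 : ℝ) ^ (simr g h).toNat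

def IsUB (A : Set (CTG S.bot)) (u : CTG S.bot) : Prop := ∀ g ∈ A, LeR g u

def IsLubR (A : Set (CTG S.bot)) (u : CTG S.bot) : Prop :=
  IsUB A u ∧ ∀ v, IsUB A v → LeR u v

def IsLB (A : Set (CTG S.bot)) (l : CTG S.bot) : Prop := ∀ g ∈ A, LeR l g

def IsGlbR (A : Set (CTG S.bot)) (l : CTG S.bot) : Prop :=
  IsLB A l ∧ ∀ m, IsLB A m → LeR m l

/-- A directed set: non-empty and every two elements have an upper bound inside. -/
def DirectedR (A : Set (CTG S.bot)) : Prop :=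
  A.Nonempty ∧ ∀ g ∈ A, ∀ h ∈ A, ∃ u ∈ A, LeR g u ∧ LeR h u

/-- `L` is the limit inferior `⨆_{β<α} ⨅_{β≤ι<α} f ι` of the ordinal-indexed
sequence `(f ι)_{ι<α}` in the rigid partial order. -/
def IsLiminfR (α : Ordinal.{0}) (f : Ordinal.{0} → CTG S.bot) (L : CTG S.bot) : Prop :=
  ∃ inf : Ordinal.{0} → CTG S.bot,
    (∀ β < α, IsGlbR {g | ∃ ι, β ≤ ι ∧ ι < α ∧ g = f ι} (inf β)) ∧
    IsLubR {g | ∃ β < α, g = inf β} L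

/-- Cauchy condition for an ordinal-indexed sequence w.r.t. the rigid distance. -/
def OrdCauchy (α : Ordinal.{0}) (f : Ordinal.{0} → CTG S.bot) : Prop :=
  ∀ ε : ℝ, 0 < ε → ∃ β < α, ∀ ι ι' : Ordinal.{0},
    β < ι → ι < ι' → ι' < α → rdist (f ι) (f ι') < ε

/-- Convergence of an ordinal-indexed sequence to `g` w.r.t. the rigid distance. -/
def OrdTendsto (α : Ordinal.{0}) (f : Ordinal.{0} → CTG S.bot) (g : CTG S.bot) : Prop :=
  ∀ ε : ℝ, 0 < ε → ∃ β < α, ∀ ι : Ordinal.{0}, β < ι → ι < α → rdist (f ι) g < ε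

/-- `u` is the unravelling of `g`: the term tree with the same positions and
labels as `g` and trivial aliasing. -/
def IsUnravelling (g u : CTG S) : Prop :=
  u.pos = g.pos ∧ (∀ π ∈ g.pos, u.labAt π = g.labAt π) ∧
  (∀ π π' : List ℕ, u.Aliases π π' ↔ (π ∈ g.pos ∧ π = π'))

end CTG

/-- A labelled quotient tree over a signature `S`. -/
structure LQT (S : Signature) where
  P : Set (List ℕ)
  nonempty : P.Nonempty
  l : List ℕ → S.Sym
  rel : List ℕ → List ℕ → Prop
  rel_refl : ∀ π ∈ P, rel π π
  rel_symm : ∀ π π' : List ℕ, rel π π' → rel π' π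
  rel_trans : ∀ π π' π'' : List ℕ, rel π π' → rel π' π'' → rel π π''
  rel_mem : ∀ π π' : List ℕ, rel π π' → π ∈ P ∧ π' ∈ P
  reach_mem : ∀ (π : List ℕ) (i : ℕ), π ++ [i] ∈ P → π ∈ P
  reach_ar : ∀ (π : List ℕ) (i : ℕ), π ++ [i] ∈ P → i < S.ar (l π)
  congr_lab : ∀ π π' : List ℕ, rel π π' → l π = l π'
  congr_suc : ∀ (π π' : List ℕ) (i : ℕ), rel π π' → i < S.ar (l π) →
    rel (π ++ [i]) (π' ++ [i])

end TGR

namespace TGR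

section Aux

variable {S : Signature} {N : Type}

lemma isPos_nil' {g : TermGraph S N} : ∀ {π : List ℕ} {n : N},
    g.IsPos π n → π = [] → n = g.root := by
  intro π n h
  induction h with
  | root => intro _; rfl
  | step h i ih => intro he; exact absurd he (by simp)

lemma isPos_nil {g : TermGraph S N} {n : N} (h : g.IsPos [] n) : n = g.root :=
  isPos_nil' h rfl

/-- Inversion for positions ending in an index. -/
lemma pos_concat {g : TermGraph S N} : ∀ {ρ : List ℕ} {y : N}, g.IsPos ρ y →
    ∀ {π : List ℕ} {j : ℕ}, ρ = π ++ [j] →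
    ∃ x : N, g.IsPos π x ∧ ∃ h : j < S.ar (g.lab x), y = g.suc x ⟨j, h⟩ := by
  intro ρ y h
  induction h with
  | root => intro π j he; exact absurd he (by simp)
  | @step π' n h i ih =>
    intro π j he
    have hlen : π'.length = π.length := by
      have := congrArg List.length he; simpa using this
    obtain ⟨h1, h2⟩ := List.append_inj he hlen
    have hij : (i : ℕ) = j := by simpa using h2
    subst h1
    exact ⟨n, h, hij ▸ i.isLt, by cases hij; rfl⟩

lemma isPos_unique {g : TermGraph S N} : ∀ {π : List ℕ} {n n' : N},
    g.IsPos π n → g.IsPos π n' → n = n' := by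
  intro π n n' h
  induction h generalizing n' with
  | root => intro h'; exact (isPos_nil h').symm
  | @step π m h i ih =>
    intro h'
    obtain ⟨x, hx, hj, rfl⟩ := pos_concat h' rfl
    cases ih hx
    rfl

lemma isPos_prefix {g : TermGraph S N} : ∀ {π : List ℕ} {n : N},
    g.IsPos π n → ∀ {π' : List ℕ}, π' <+: π → ∃ m, g.IsPos π' m := by
  intro π n h
  induction h with
  | root => intro π' hp; rw [List.prefix_nil.mp hp]; exact ⟨g.root, TermGraph.IsPos.root⟩
  | @step π m h i ih =>
    intro π' hp
    rcases (List.prefix_concat_iff.mp hp) with h1 | h2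
    · exact h1 ▸ ⟨_, h.step i⟩
    · exact ih h2

lemma acyclic_prefix {g : TermGraph S N} {π π' : List ℕ}
    (h : g.IsAcyclicPos π) (hp : π' <+: π) : g.IsAcyclicPos π' :=
  fun π₁ π₂ n h1 h2 hn1 hn2 => h π₁ π₂ n h1 (h2.trans hp) hn1 hn2

/-- The map from the truncation back into `g`. -/
noncomputable def truncMap (g : TermGraph S.bot N) (d : ℕ)
    (x : TermGraph.TNode g d) : N :=
  match x.1 with
  | Sum.inl n => n
  | Sum.inr p =>
    if d = 0 then g.root
    else if h : p.2 < S.bot.ar (g.lab p.1) then g.suc p.1 ⟨p.2, h⟩ else g.root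

lemma truncMap_pos {g : TermGraph S.bot N} {d : ℕ} :
    ∀ {π : List ℕ} {x : TermGraph.TNode g d},
    (g.trunc d).IsPos π x → g.IsPos π (truncMap g d x) := by
  intro π x h
  induction h with
  | root =>
    show g.IsPos [] (truncMap g d (TermGraph.truncRoot g d))
    unfold TermGraph.truncRoot
    by_cases hd : d = 0
    · erw [dif_pos hd]; simp [truncMap, hd]; exact TermGraph.IsPos.root
    · erw [dif_neg hd]; exact TermGraph.IsPos.root
  | @step π x h i ih =>
    obtain ⟨xv, hxv⟩ := x
    cases xv with
    | inr p => exact absurd i.isLt (Nat.not_lt_zero _)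
    | inl n =>
      have hd : d ≠ 0 := by
        intro h0; subst h0; exact TermGraph.not_retained_zero n hxv
      have hn : truncMap g d ⟨Sum.inl n, hxv⟩ = n := rfl
      show g.IsPos (π ++ [(i : ℕ)])
        (truncMap g d ((g.trunc d).suc ⟨Sum.inl n, hxv⟩ i))
      have hi : (i : ℕ) < S.bot.ar (g.lab n) := i.isLt
      show g.IsPos (π ++ [(i : ℕ)])
        (truncMap g d (TermGraph.truncSuc g d ⟨Sum.inl n, hxv⟩ i))
      rw [TermGraph.truncSuc]; beta_reduce
      by_cases hf : g.IsFringe d ((n, (i : ℕ)))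
      · erw [dif_pos hf]
        show g.IsPos (π ++ [(i : ℕ)])
          (if d = 0 then g.root
           else if h : (i:ℕ) < S.bot.ar (g.lab n) then g.suc n ⟨(i:ℕ), h⟩ else g.root)
        rw [if_neg hd, dif_pos hi]
        rw [hn] at ih
        exact ih.step ⟨(i:ℕ), hi⟩
      · erw [dif_neg hf]
        show g.IsPos (π ++ [(i : ℕ)]) (g.suc n ⟨(i:ℕ), i.isLt⟩)
        rw [hn] at ih
        exact ih.step ⟨(i:ℕ), i.isLt⟩

/-- Lifting acyclic positions of retained nodes into the truncation. -/
lemma trunc_lift {g : TermGraph S.bot N} {d : ℕ} (hd : d ≠ 0) :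
    ∀ {π : List ℕ} {n : N}, g.IsPos π n → g.IsAcyclicPos π →
    ∀ hn : g.Retained d n, (g.trunc d).IsPos π ⟨Sum.inl n, hn⟩ := by
  intro π n h
  induction h with
  | root =>
    intro _ hn
    have : (g.trunc d).root = ⟨Sum.inl g.root, hn⟩ := by
      show TermGraph.truncRoot g d = _
      unfold TermGraph.truncRoot
      erw [dif_neg hd]
    rw [← this]
    exact TermGraph.IsPos.root
  | @step π m h i ih =>
    intro hacy hn
    have hmem : m ∈ g.acyPred (g.suc m i) :=
      ⟨π, (i : ℕ), ⟨by simpa using h.step i, hacy⟩, h⟩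
    have hm : g.Retained d m := TermGraph.Retained.pred hn hmem
    have hπacy : g.IsAcyclicPos π := acyclic_prefix hacy ⟨[(i:ℕ)], rfl⟩
    have hpos := ih hπacy hm
    have hnotf : ¬ g.IsFringe d ((m, (i : ℕ))) := by
      intro hf
      unfold TermGraph.IsFringe at hf
      rw [if_neg hd] at hf
      obtain ⟨_, h', hcase⟩ := hf
      have hfin : (⟨(i:ℕ), h'⟩ : Fin (S.bot.ar (g.lab m))) = i := Fin.ext rfl
      rw [hfin] at hcase
      rcases hcase with hc | ⟨_, hc⟩
      · exact hc hn
      · exact hc hmem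
    have hsuc : (g.trunc d).suc ⟨Sum.inl m, hm⟩ i = ⟨Sum.inl (g.suc m i), hn⟩ := by
      show TermGraph.truncSuc g d ⟨Sum.inl m, hm⟩ i = _
      erw [TermGraph.truncSuc]; beta_reduce
      erw [dif_neg hnotf]
    have := (hpos.step i)
    rw [hsuc] at this
    exact this

/-- The trunc node at a prefix of a position of an `inl` node is `inl` of the
corresponding node of `g`. -/
lemma node_inl_of_prefix {g : TermGraph S.bot N} {d : ℕ} {π : List ℕ} {n : N}
    {hn : Sum.elim (g.Retained d) (g.IsFringe d) (Sum.inl n)}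
    (hp : (g.trunc d).IsPos π ⟨Sum.inl n, hn⟩)
    {π' : List ℕ} {k : N} (hpre : π' <+: π) (hk : g.IsPos π' k) :
    ∃ h', (g.trunc d).IsPos π' ⟨Sum.inl k, h'⟩ := by
  rcases eq_or_ne π' π with rfl | hne
  · have : g.IsPos π' n := truncMap_pos hp
    cases isPos_unique hk this
    exact ⟨hn, hp⟩
  · obtain ⟨t, rfl⟩ := hpre
    cases t with
    | nil => simp at hne
    | cons j t' =>
      have hpre2 : (π' ++ [j]) <+: (π' ++ j :: t') := ⟨t', by simp⟩
      obtain ⟨y, hy⟩ := isPos_prefix hp hpre2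
      obtain ⟨x, hx, hj, rfl⟩ := pos_concat hy rfl
      obtain ⟨xv, hxv⟩ := x
      cases xv with
      | inr p => exact absurd hj (Nat.not_lt_zero _)
      | inl m =>
        have : g.IsPos π' m := truncMap_pos hx
        cases isPos_unique hk this
        exact ⟨hxv, hx⟩

lemma trunc_nodePosAcy {g : TermGraph S.bot N} {d : ℕ} {n : N}
    (hn : Sum.elim (g.Retained d) (g.IsFringe d) (Sum.inl n)) :
    (g.trunc d).nodePosAcy ⟨Sum.inl n, hn⟩ = g.nodePosAcy n := by
  have hretained : g.Retained d n := hn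
  have hd : d ≠ 0 := by
    intro h0; subst h0; exact TermGraph.not_retained_zero n hretained
  ext π
  constructor
  · rintro ⟨hp, hacy⟩
    refine ⟨truncMap_pos hp, ?_⟩
    intro π₁ π₂ k hpre12 hpre2 hk1 hk2
    obtain ⟨h1', t1⟩ := node_inl_of_prefix hp (hpre12.trans hpre2) hk1
    obtain ⟨h2', t2⟩ := node_inl_of_prefix hp hpre2 hk2
    exact hacy π₁ π₂ ⟨Sum.inl k, h1'⟩ hpre12 hpre2 t1 t2
  · rintro ⟨hp, hacy⟩
    refine ⟨trunc_lift hd hp hacy hretained, ?_⟩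
    intro π₁ π₂ x hpre12 hpre2 hx1 hx2
    exact hacy π₁ π₂ (truncMap g d x) hpre12 hpre2
      (truncMap_pos hx1) (truncMap_pos hx2)

end Aux

/-- For every partial term graph `g` and every `d ≤ ω`, the
rigid truncation of `g` at depth `d` is below `g` in the rigid partial order,
i.e. there is a rigid `⊥`-homomorphism from `g†d` to `g` (for `d = ω` one has
`g†ω = g`). -/
theorem trunc_leR_self (S : Signature) (N : Type) (g : TermGraph S.bot N)
    (hg : g.Reachable) :
    (∀ d : ℕ, ∃ φ, TermGraph.IsRigidBotHom (g.trunc d) g φ) ∧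
    (∃ φ, TermGraph.IsRigidBotHom g g φ) := by
  constructor
  · intro d
    refine ⟨truncMap g d, ⟨?_, ?_, ?_⟩, ?_⟩
    · -- root
      show truncMap g d (TermGraph.truncRoot g d) = g.root
      unfold TermGraph.truncRoot
      by_cases hd : d = 0
      · erw [dif_pos hd]; simp [truncMap, hd]
      · erw [dif_neg hd]; rfl
    · -- labels
      rintro ⟨xv, hxv⟩ hlab
      cases xv with
      | inr p => exact absurd rfl hlab
      | inl n => rfl
    · -- successors
      rintro ⟨xv, hxv⟩ hlab i hi hi'
      cases xv with
      | inr p => exact absurd rfl hlab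
      | inl n =>
        have hd : d ≠ 0 := by
          intro h0; subst h0; exact TermGraph.not_retained_zero n hxv
        show truncMap g d (TermGraph.truncSuc g d ⟨Sum.inl n, hxv⟩ ⟨i, hi⟩)
          = g.suc n ⟨i, hi'⟩
        rw [TermGraph.truncSuc]; beta_reduce
        by_cases hf : g.IsFringe d ((n, i))
        · erw [dif_pos hf]
          show (if d = 0 then g.root
            else if h : i < S.bot.ar (g.lab n) then g.suc n ⟨i, h⟩ else g.root)
            = g.suc n ⟨i, hi'⟩
          rw [if_neg hd, dif_pos (show i < S.bot.ar (g.lab n) from hi')]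
        · erw [dif_neg hf]; rfl
    · -- rigidity
      rintro ⟨xv, hxv⟩ hlab
      cases xv with
      | inr p => exact absurd rfl hlab
      | inl n => exact trunc_nodePosAcy hxv
  · exact ⟨id, ⟨rfl, fun n _ => rfl, fun n _ i hi hi' => rfl⟩, fun n _ => rfl⟩

end TGR
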